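/- Averaging over residues: for any positive integer q, Σ_{a mod q, (a,q)=1} g(q,a) = g - Σ_{p | q} 1/p, where g = γ - Σ_p Σ_{ν ≥ 2} 1/(ν p^ν) is Mertens's constant. -/

import Mathlib

open Real MeasureTheory Filter Topology Set Finset
open scoped Classical

/-- `π(t;q,a)`, the number of primes `p ≤ t` with `p ≡ a [MOD q]`. -/
noncomputable def primePiMod (q a : ℕ) (t : ℝ) : ℝ :=
  (((Nat.floor t + 1).primesBelow).filter (fun p => p % q = a % q)).card

/-- The logarithmic integral `li(t) = ∫_2^t du / log u`. -/
noncomputable def li (t : ℝ) : ℝ := ∫ u in (2 : ℝ)..t, 1 / Real.log u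

/-- `E(t;q,a) = π(t;q,a) - φ(q)⁻¹ li(t)`. -/
noncomputable def EMod (q a : ℕ) (t : ℝ) : ℝ :=
  primePiMod q a t - li t / (q.totient : ℝ)

/-- The sum `Σ_{p, ν ≥ 2, p^ν ≡ a mod q} 1/(ν p^ν)`. -/
noncomputable def primePowerResidueSum (q a : ℕ) : ℝ :=
  ∑' p : Nat.Primes, ∑' ν : ℕ,
    if 2 ≤ ν ∧ (p : ℕ) ^ ν % q = a % q then ((ν : ℝ) * (p : ℕ) ^ ν)⁻¹ else 0

/-- `g(q,a) = φ(q)⁻¹ γ + log 𝓛 - Σ_{p, ν ≥ 2, p^ν ≡ a mod q} 1/(ν p^ν)`,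
where `𝓛 = 𝓛(q,a)` is the positive real number with
`𝓛^{φ(q)} = (φ(q)/q) ∏_{χ ≠ χ₀} L(1,χ)^{χ̄(a)}`. -/
noncomputable def mertensG (q a : ℕ) (ℒ : ℝ) : ℝ :=
  Real.eulerMascheroniConstant / (q.totient : ℝ) + Real.log ℒ -
    primePowerResidueSum q a

/-- The defining property of the constant `𝓛(q,a)`:
`𝓛(q,a)^{φ(q)} = (φ(q)/q) ∏_{χ ≠ χ₀} L(1,χ)^{χ̄(a)}`, `𝓛(q,a) > 0`. -/
def IsMertensL (q a : ℕ) [NeZero q] (ℒ : ℝ) : Prop :=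
  0 < ℒ ∧ (ℒ : ℂ) ^ (q.totient : ℕ) =
    ((q.totient : ℂ) / (q : ℂ)) *
      ∏ χ ∈ Finset.univ.filter (fun χ : DirichletCharacter ℂ q => χ ≠ 1),
        (DirichletCharacter.LFunction χ 1) ^ ((starRingEnd ℂ) (χ a))


/-- Mertens's constant `g = γ - Σ_p Σ_{ν ≥ 2} 1/(ν p^ν)`. -/
noncomputable def mertensConstant : ℝ :=
  Real.eulerMascheroniConstant -
    ∑' p : Nat.Primes, ∑' ν : ℕ, if 2 ≤ ν then ((ν : ℝ) * (p : ℕ) ^ ν)⁻¹ else 0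

namespace MGAux

lemma sum_zmod {M : Type*} [AddCommMonoid M] (q : ℕ) [NeZero q] (f : ZMod q → M)
    (hf : ∀ z : ZMod q, ¬IsUnit z → f z = 0) :
    ∑ a ∈ (Finset.Icc 1 q).filter (fun a => Nat.Coprime q a), f (a : ZMod q)
      = ∑ z : ZMod q, f z := by
  have hq : 0 < q := Nat.pos_of_ne_zero (NeZero.ne q)
  have h1 : ∑ a ∈ (Finset.Icc 1 q).filter (fun a => Nat.Coprime q a), f (a : ZMod q)
      = ∑ a ∈ Finset.Icc 1 q, f (a : ZMod q) := by
    rw [Finset.sum_filter]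
    refine Finset.sum_congr rfl fun a _ => ?_
    by_cases h : Nat.Coprime q a
    · simp [h]
    · rw [if_neg h, hf _ ?_]
      rw [ZMod.isUnit_iff_coprime]
      exact fun hc => h (Nat.coprime_comm.mp hc)
  rw [h1]
  refine Finset.sum_nbij' (fun a => (a : ZMod q))
    (fun z => if z = 0 then q else z.val) ?_ ?_ ?_ ?_ ?_
  · intro a _; exact Finset.mem_univ _
  · intro z _
    by_cases h : z = 0
    · rw [if_pos h, Finset.mem_Icc]; omega
    · rw [if_neg h]
      have h1 : z.val ≠ 0 := fun hz => h (by
        have := ZMod.natCast_rightInverse (n := q) z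
        rw [hz, Nat.cast_zero] at this; exact this.symm)
      have h2 : z.val < q := ZMod.val_lt z
      rw [Finset.mem_Icc]
      omega
  · intro a ha
    rw [Finset.mem_Icc] at ha
    by_cases h : (a : ZMod q) = 0
    · rw [if_pos h]
      have hd : q ∣ a := (ZMod.natCast_eq_zero_iff a q).mp h
      have := Nat.le_of_dvd (by omega) hd
      omega
    · rw [if_neg h, ZMod.val_natCast]
      have : a ≠ q := fun hh => h (by rw [hh]; exact ZMod.natCast_self q)
      exact Nat.mod_eq_of_lt (by omega)
  · intro z _
    by_cases h : z = 0
    · simp [h]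
    · rw [if_neg h]
      exact ZMod.natCast_rightInverse z
  · intro a _; rfl

lemma card_eq_totient (q : ℕ) [NeZero q] :
    ((Finset.Icc 1 q).filter (fun a => Nat.Coprime q a)).card = q.totient := by
  have key := sum_zmod q (fun z : ZMod q => if IsUnit z then (1 : ℕ) else 0)
    (fun z hz => if_neg hz)
  have lhs : ∑ a ∈ (Finset.Icc 1 q).filter (fun a => Nat.Coprime q a),
      (if IsUnit ((a : ZMod q)) then (1:ℕ) else 0)
      = ((Finset.Icc 1 q).filter (fun a => Nat.Coprime q a)).card := by
    rw [Finset.card_eq_sum_ones]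
    refine Finset.sum_congr rfl fun a ha => ?_
    rw [Finset.mem_filter] at ha
    rw [if_pos]
    rw [ZMod.isUnit_iff_coprime]
    exact Nat.coprime_comm.mp ha.2
  have hbij : Function.Bijective
      (fun u : (ZMod q)ˣ => (⟨u.1, u.isUnit⟩ : {z : ZMod q // IsUnit z})) := by
    constructor
    · intro u v huv
      exact Units.ext (congrArg Subtype.val huv)
    · rintro ⟨z, hz⟩
      exact ⟨hz.unit, Subtype.ext hz.unit_spec⟩
  have rhs : ∑ z : ZMod q, (if IsUnit z then (1:ℕ) else 0) = q.totient := by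
    rw [← Finset.card_filter, ← Fintype.card_subtype, ← Fintype.card_of_bijective hbij,
      ZMod.card_units_eq_totient q]
  rw [← lhs, key, rhs]




lemma hasSum_S {p : ℕ} (hp : 2 ≤ p) :
    HasSum (fun ν : ℕ => if 2 ≤ ν then ((ν : ℝ) * (p : ℝ) ^ ν)⁻¹ else 0)
      (-Real.log (1 - (p : ℝ)⁻¹) - (p : ℝ)⁻¹) := by
  have hp1 : (1 : ℝ) < (p : ℝ) := by exact_mod_cast hp.trans_lt' one_lt_two
  set x : ℝ := (p : ℝ)⁻¹ with hx
  have hx0 : 0 ≤ x := by positivity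
  have hx1 : x < 1 := by rw [hx, inv_lt_one_iff₀]; right; exact hp1
  have h := Real.hasSum_pow_div_log_of_abs_lt_one (x := x) (by rwa [abs_of_nonneg hx0])
  have h1 : HasSum (fun n : ℕ => x ^ (n + 1 + 1) / (n + 1 + 1)) (-Real.log (1 - x) - x) := by
    have h2 := (hasSum_nat_add_iff' (f := fun n : ℕ => x ^ (n + 1) / (n + 1)) 1).mpr h
    simpa using h2
  have heq : (fun n : ℕ => x ^ (n + 1 + 1) / (n + 1 + 1))
      = fun n : ℕ =>
        (if 2 ≤ n + 2 then (((n + 2 : ℕ) : ℝ) * (p : ℝ) ^ (n + 2))⁻¹ else 0) := by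
    funext n
    rw [if_pos (by omega), mul_inv, ← inv_pow, ← hx, div_eq_mul_inv]
    push_cast
    ring
  rw [heq] at h1
  have h3 := (hasSum_nat_add_iff
    (f := fun ν : ℕ => if 2 ≤ ν then ((ν : ℝ) * (p : ℝ) ^ ν)⁻¹ else 0) 2).mp h1
  simpa [Finset.sum_range_succ] using h3

lemma hasSum_geomTail {x : ℝ} (hx0 : 0 ≤ x) (hx1 : x < 1) :
    HasSum (fun ν : ℕ => if 2 ≤ ν then x ^ ν else 0) (x ^ 2 * (1 - x)⁻¹) := by
  have h := (hasSum_geometric_of_lt_one hx0 hx1).mul_left (x ^ 2)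
  have heq : (fun n : ℕ => x ^ 2 * x ^ n)
      = fun n : ℕ => (if 2 ≤ n + 2 then x ^ (n + 2) else 0) := by
    funext n; rw [if_pos (by omega), pow_add, mul_comm]
  rw [heq] at h
  have h3 := (hasSum_nat_add_iff (f := fun ν : ℕ => if 2 ≤ ν then x ^ ν else 0) 2).mp h
  simpa [Finset.sum_range_succ] using h3

lemma summable_cond {p : ℕ} (hp : 2 ≤ p) (cnd : ℕ → Prop) [DecidablePred cnd] :
    Summable (fun ν : ℕ => if 2 ≤ ν ∧ cnd ν then ((ν : ℝ) * (p : ℝ) ^ ν)⁻¹ else 0) := by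
  refine Summable.of_nonneg_of_le (fun ν => ?_) (fun ν => ?_) (hasSum_S hp).summable
  · positivity
  · by_cases h : 2 ≤ ν ∧ cnd ν
    · rw [if_pos h, if_pos h.1]
    · rw [if_neg h]; positivity

lemma tsum_cond_le {p : ℕ} (hp : 2 ≤ p) (cnd : ℕ → Prop) [DecidablePred cnd] :
    ∑' ν : ℕ, (if 2 ≤ ν ∧ cnd ν then ((ν : ℝ) * (p : ℝ) ^ ν)⁻¹ else 0)
      ≤ 2 * ((p : ℝ)⁻¹) ^ 2 := by
  have hp0 : (0 : ℝ) < p := by positivity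
  have hp1 : (1 : ℝ) < (p : ℝ) := by exact_mod_cast hp.trans_lt' one_lt_two
  set x : ℝ := (p : ℝ)⁻¹ with hxdef
  have hx0 : 0 ≤ x := by positivity
  have hx1 : x < 1 := by rw [hxdef, inv_lt_one_iff₀]; right; exact hp1
  have h1 : ∑' ν : ℕ, (if 2 ≤ ν ∧ cnd ν then ((ν : ℝ) * (p : ℝ) ^ ν)⁻¹ else 0)
      ≤ ∑' ν : ℕ, (if 2 ≤ ν then x ^ ν else 0) := by
    refine Summable.tsum_le_tsum (fun ν => ?_) (summable_cond hp cnd) (hasSum_geomTail hx0 hx1).summable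
    by_cases h : 2 ≤ ν ∧ cnd ν
    · rw [if_pos h, if_pos h.1, hxdef, inv_pow]
      have hν : (0:ℝ) < (ν : ℝ) := by exact_mod_cast (by omega : 0 < ν)
      rw [inv_le_inv₀ (by positivity) (by positivity)]
      calc ((p:ℝ))^ν = 1 * (p:ℝ)^ν := (one_mul _).symm
        _ ≤ (ν : ℝ) * (p:ℝ)^ν := by
            refine mul_le_mul_of_nonneg_right ?_ (by positivity)
            exact_mod_cast Nat.one_le_iff_ne_zero.mpr (by omega)
    · rw [if_neg h]
      positivity
  refine h1.trans ?_
  rw [(hasSum_geomTail hx0 hx1).tsum_eq]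
  have h2 : (1 - x)⁻¹ ≤ 2 := by
    have hxhalf : x ≤ 1 / 2 := by
      rw [hxdef, inv_le_comm₀ hp0 (by norm_num)]
      norm_num
      exact_mod_cast hp
    rw [inv_le_comm₀ (by linarith) (by norm_num)]
    linarith
  calc x ^ 2 * (1 - x)⁻¹ ≤ x ^ 2 * 2 := mul_le_mul_of_nonneg_left h2 (by positivity)
    _ = 2 * x ^ 2 := by ring

lemma summable_primes {u : Nat.Primes → ℝ} (h0 : ∀ p, 0 ≤ u p)
    (hle : ∀ p, u p ≤ 2 * (((p : ℕ) : ℝ)⁻¹) ^ 2) : Summable u := by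
  refine Summable.of_nonneg_of_le h0 hle ?_
  have h : Summable (fun n : ℕ => ((n : ℝ) ^ 2)⁻¹) :=
    Real.summable_nat_pow_inv.mpr one_lt_two
  have h2 := (h.comp_injective (Subtype.coe_injective :
    Function.Injective ((↑) : Nat.Primes → ℕ))).mul_left 2
  refine h2.congr fun p => ?_
  simp [Function.comp, inv_pow]



lemma sum_indicator_residue (q : ℕ) [NeZero q] (m : ℕ) (c : ℝ) :
    ∑ a ∈ (Finset.Icc 1 q).filter (fun a => Nat.Coprime q a),
      (if m % q = a % q then c else 0) = if Nat.Coprime q m then c else 0 := by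
  classical
  have h1 : ∑ a ∈ (Finset.Icc 1 q).filter (fun a => Nat.Coprime q a),
      (if m % q = a % q then c else 0)
      = ∑ a ∈ (Finset.Icc 1 q).filter (fun a => Nat.Coprime q a),
        (fun z : ZMod q => if (m : ZMod q) = z ∧ IsUnit z then c else 0) (a : ZMod q) := by
    refine Finset.sum_congr rfl fun a ha => ?_
    rw [Finset.mem_filter] at ha
    have hu : IsUnit ((a : ZMod q)) := by
      rw [ZMod.isUnit_iff_coprime]; exact Nat.coprime_comm.mp ha.2
    dsimp only
    have hcond : (m % q = a % q) ↔ ((m : ZMod q) = (a : ZMod q) ∧ IsUnit ((a : ZMod q))) :=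
      ⟨fun h => ⟨(ZMod.natCast_eq_natCast_iff' m a q).mpr h, hu⟩,
        fun h => (ZMod.natCast_eq_natCast_iff' m a q).mp h.1⟩
    exact if_congr hcond rfl rfl
  rw [h1, sum_zmod q (fun z : ZMod q => if (m : ZMod q) = z ∧ IsUnit z then c else 0)
    (fun z hz => by simp [hz])]
  rw [Finset.sum_eq_single_of_mem ((m : ZMod q)) (Finset.mem_univ _)
    (fun z _ hz => by simp [Ne.symm hz])]
  by_cases h : Nat.Coprime m q
  · rw [if_pos ⟨rfl, (ZMod.isUnit_iff_coprime m q).mpr h⟩, if_pos (Nat.coprime_comm.mp h)]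
  · rw [if_neg, if_neg (fun hc => h (Nat.coprime_comm.mp hc))]
    rintro ⟨-, hu⟩
    exact h ((ZMod.isUnit_iff_coprime m q).mp hu)

lemma prod_cpow {α : Type*} (s : Finset α) (z : ℂ) (hz : z ≠ 0) (f : α → ℂ) :
    ∏ a ∈ s, z ^ f a = z ^ (∑ a ∈ s, f a) := by
  classical
  induction s using Finset.induction_on with
  | empty => simp
  | insert _ _ ha ih =>
    rw [Finset.prod_insert ha, Finset.sum_insert ha, Complex.cpow_add _ _ hz, ih]

lemma conj_char_sum (q : ℕ) [NeZero q] (χ : DirichletCharacter ℂ q) (hχ : χ ≠ 1) :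
    ∑ a ∈ (Finset.Icc 1 q).filter (fun a => Nat.Coprime q a),
      (starRingEnd ℂ) (χ (a : ZMod q)) = 0 := by
  rw [← map_sum]
  rw [sum_zmod q (fun z : ZMod q => χ z) (fun z hz => χ.map_nonunit hz)]
  rw [MulChar.sum_eq_zero_of_ne_one hχ, map_zero]

lemma tsum_primes_dvd (q : ℕ) [NeZero q] (T : ℕ → ℝ) :
    ∑' p : Nat.Primes, (if (p : ℕ) ∣ q then T p else 0)
      = ∑ p ∈ q.primeFactors, T p := by
  classical
  set s : Finset Nat.Primes := q.primeFactors.attach.map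
    ⟨fun x => (⟨x.1, Nat.prime_of_mem_primeFactors x.2⟩ : Nat.Primes),
      fun x y h => by
        apply Subtype.ext
        have := congrArg (fun t : Nat.Primes => (t : ℕ)) h
        simpa using this⟩ with hs
  have hmem : ∀ p : Nat.Primes, p ∈ s ↔ (p : ℕ) ∈ q.primeFactors := by
    intro p
    simp only [hs, Finset.mem_map, Finset.mem_attach, true_and, Function.Embedding.coeFn_mk]
    constructor
    · rintro ⟨x, hx⟩
      rw [← hx]
      exact x.2
    · intro hp
      exact ⟨⟨(p : ℕ), hp⟩, Subtype.ext rfl⟩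
  rw [tsum_eq_sum (s := s) (fun p hp => ?_)]
  · rw [hs, Finset.sum_map]
    rw [← Finset.sum_attach q.primeFactors (fun n => T n)]
    refine Finset.sum_congr rfl fun x _ => ?_
    exact if_pos (Nat.dvd_of_mem_primeFactors x.2)
  · rw [if_neg]
    intro hd
    exact hp ((hmem p).mpr (Nat.mem_primeFactors.mpr ⟨p.2, hd, NeZero.ne q⟩))

lemma totient_div_eq_prod (q : ℕ) [NeZero q] :
    ((q.totient : ℝ)) / q = ∏ p ∈ q.primeFactors, (1 - (p : ℝ)⁻¹) := by
  have h := Nat.totient_eq_mul_prod_factors q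
  have hq : (q : ℝ) ≠ 0 := Nat.cast_ne_zero.mpr (NeZero.ne q)
  have h2 : (q.totient : ℝ) = q * ∏ p ∈ q.primeFactors, (1 - (p : ℝ)⁻¹) := by
    have h3 := congrArg (fun x : ℚ => (x : ℝ)) h
    push_cast at h3
    exact h3
  rw [h2, mul_comm, mul_div_assoc, div_self hq, mul_one]

lemma summable_S {p : ℕ} (hp : 2 ≤ p) :
    Summable (fun ν : ℕ => if 2 ≤ ν then ((ν : ℝ) * (p : ℝ) ^ ν)⁻¹ else 0) :=
  (hasSum_S hp).summable

lemma tsum_S_nonneg (p : ℕ) :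
    0 ≤ ∑' ν : ℕ, (if 2 ≤ ν then ((ν : ℝ) * (p : ℝ) ^ ν)⁻¹ else 0) := by
  refine tsum_nonneg fun ν => ?_
  by_cases h : 2 ≤ ν
  · rw [if_pos h]; positivity
  · rw [if_neg h]

lemma tsum_S_le {p : ℕ} (hp : 2 ≤ p) :
    ∑' ν : ℕ, (if 2 ≤ ν then ((ν : ℝ) * (p : ℝ) ^ ν)⁻¹ else 0)
      ≤ 2 * ((p : ℝ)⁻¹) ^ 2 := by
  have h := tsum_cond_le hp (fun _ => True)
  simpa using h

lemma tsum_cond_nonneg (p : ℕ) (cnd : ℕ → Prop) [DecidablePred cnd] :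
    0 ≤ ∑' ν : ℕ, (if 2 ≤ ν ∧ cnd ν then ((ν : ℝ) * (p : ℝ) ^ ν)⁻¹ else 0) := by
  refine tsum_nonneg fun ν => ?_
  by_cases h : 2 ≤ ν ∧ cnd ν
  · rw [if_pos h]; positivity
  · rw [if_neg h]

lemma sum_a_tsum (q : ℕ) [NeZero q] {p : ℕ} (hp : p.Prime) :
    ∑ a ∈ (Finset.Icc 1 q).filter (fun a => Nat.Coprime q a),
      (∑' ν : ℕ, if 2 ≤ ν ∧ p ^ ν % q = a % q then ((ν : ℝ) * (p : ℝ) ^ ν)⁻¹ else 0)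
      = (∑' ν : ℕ, if 2 ≤ ν then ((ν : ℝ) * (p : ℝ) ^ ν)⁻¹ else 0)
        - (if p ∣ q then (∑' ν : ℕ, if 2 ≤ ν then ((ν : ℝ) * (p : ℝ) ^ ν)⁻¹ else 0) else 0) := by
  classical
  have hp2 := hp.two_le
  rw [← Summable.tsum_finsetSum (f := fun (a : ℕ) (ν : ℕ) =>
      if 2 ≤ ν ∧ p ^ ν % q = a % q then ((ν : ℝ) * (p : ℝ) ^ ν)⁻¹ else 0)
    (fun a _ => summable_cond hp2 (fun ν => p ^ ν % q = a % q))]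
  have hswap : ∀ ν : ℕ,
      (∑ a ∈ (Finset.Icc 1 q).filter (fun a => Nat.Coprime q a),
        if 2 ≤ ν ∧ p ^ ν % q = a % q then ((ν : ℝ) * (p : ℝ) ^ ν)⁻¹ else 0)
      = if 2 ≤ ν ∧ ¬ p ∣ q then ((ν : ℝ) * (p : ℝ) ^ ν)⁻¹ else 0 := by
    intro ν
    by_cases h2 : 2 ≤ ν
    · have hterm : ∀ a : ℕ, (if 2 ≤ ν ∧ p ^ ν % q = a % q then ((ν : ℝ) * (p : ℝ) ^ ν)⁻¹ else 0)
          = (if p ^ ν % q = a % q then ((ν : ℝ) * (p : ℝ) ^ ν)⁻¹ else 0) := fun a =>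
        if_congr (and_iff_right h2) rfl rfl
      rw [Finset.sum_congr rfl (fun a _ => hterm a), sum_indicator_residue q (p ^ ν)]
      have hiff : Nat.Coprime q (p ^ ν) ↔ ¬ p ∣ q := by
        rw [Nat.coprime_comm, Nat.coprime_pow_left_iff (by omega)]
        exact hp.coprime_iff_not_dvd
      rw [if_congr hiff rfl rfl, if_congr (and_iff_right h2).symm rfl rfl]
    · rw [if_neg (fun hc => h2 hc.1)]
      refine Finset.sum_eq_zero fun a _ => if_neg (fun hc => h2 hc.1)
  rw [tsum_congr hswap]
  by_cases hdq : p ∣ q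
  · simp [hdq]
  · simp [hdq]

end MGAux

open MGAux in
lemma sum_log_L (q : ℕ) [NeZero q] (ℒ : ℕ → ℝ)
    (hℒ : ∀ a ∈ (Finset.Icc 1 q).filter (fun a => Nat.Coprime q a),
      IsMertensL q a (ℒ a)) :
    ∑ a ∈ (Finset.Icc 1 q).filter (fun a => Nat.Coprime q a), Real.log (ℒ a)
      = Real.log ((q.totient : ℝ) / q) := by
  classical
  set A := (Finset.Icc 1 q).filter (fun a => Nat.Coprime q a) with hA
  have hq : 0 < q := Nat.pos_of_ne_zero (NeZero.ne q)
  have hn0 : 0 < q.totient := Nat.totient_pos.mpr hq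
  have hP : 0 < ∏ a ∈ A, ℒ a := Finset.prod_pos fun a ha => (hℒ a ha).1
  have hLne : ∀ χ ∈ Finset.univ.filter (fun χ : DirichletCharacter ℂ q => χ ≠ 1),
      DirichletCharacter.LFunction χ 1 ≠ 0 := by
    intro χ hχ
    rw [Finset.mem_filter] at hχ
    exact DirichletCharacter.LFunction_ne_zero_of_one_le_re χ (Or.inl hχ.2) (by norm_num)
  have key : ((∏ a ∈ A, ℒ a : ℝ) : ℂ) ^ q.totient
      = (((q.totient : ℝ) / q : ℝ) : ℂ) ^ q.totient := by
    rw [Complex.ofReal_prod, ← Finset.prod_pow]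
    calc ∏ a ∈ A, ((ℒ a : ℂ)) ^ q.totient
        = ∏ a ∈ A, (((q.totient : ℂ) / q) *
            ∏ χ ∈ Finset.univ.filter (fun χ : DirichletCharacter ℂ q => χ ≠ 1),
              DirichletCharacter.LFunction χ 1 ^ ((starRingEnd ℂ) (χ a))) :=
          Finset.prod_congr rfl fun a ha => (hℒ a ha).2
      _ = ((q.totient : ℂ) / q) ^ A.card *
            ∏ a ∈ A, ∏ χ ∈ Finset.univ.filter (fun χ : DirichletCharacter ℂ q => χ ≠ 1),
              DirichletCharacter.LFunction χ 1 ^ ((starRingEnd ℂ) (χ a)) := by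
          rw [Finset.prod_mul_distrib, Finset.prod_const]
      _ = ((q.totient : ℂ) / q) ^ q.totient *
            ∏ χ ∈ Finset.univ.filter (fun χ : DirichletCharacter ℂ q => χ ≠ 1),
              ∏ a ∈ A, DirichletCharacter.LFunction χ 1 ^ ((starRingEnd ℂ) (χ a)) := by
          rw [card_eq_totient q, Finset.prod_comm]
      _ = (((q.totient : ℝ) / q : ℝ) : ℂ) ^ q.totient := by
          rw [Finset.prod_congr rfl (fun χ hχ => prod_cpow A _ (hLne χ hχ) _)]
          rw [Finset.prod_congr rfl (fun χ hχ => by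
            rw [conj_char_sum q χ (Finset.mem_filter.mp hχ).2, Complex.cpow_zero])]
          rw [Finset.prod_const_one, mul_one]
          push_cast
          ring
  have hxy : (∏ a ∈ A, ℒ a) ^ q.totient = ((q.totient : ℝ) / q) ^ q.totient := by
    exact_mod_cast key
  have hPeq : ∏ a ∈ A, ℒ a = (q.totient : ℝ) / q := by
    have hsm := pow_left_strictMonoOn₀ (M₀ := ℝ) (n := q.totient) hn0.ne'
    refine hsm.injOn (Set.mem_setOf_eq.mpr hP.le) (Set.mem_setOf_eq.mpr ?_) hxy
    positivity
  rw [← Real.log_prod (s := A) (fun a ha => (hℒ a ha).1.ne'), hPeq]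

/-- For any positive integer `q`,
`Σ_{a mod q, (a,q)=1} g(q,a) = g - Σ_{p ∣ q} 1/p`, where `g` is Mertens's constant.
Here `a` runs over the representatives `1 ≤ a ≤ q` of the invertible residue
classes mod `q`, and `𝓛 a = 𝓛(q,a)` is the constant from the definition of `g(q,a)`. -/
theorem sum_mertensG (q : ℕ) [NeZero q] (ℒ : ℕ → ℝ)
    (hℒ : ∀ a ∈ (Finset.Icc 1 q).filter (fun a => Nat.Coprime q a),
      IsMertensL q a (ℒ a)) :
    ∑ a ∈ (Finset.Icc 1 q).filter (fun a => Nat.Coprime q a), mertensG q a (ℒ a) =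
      mertensConstant - ∑ p ∈ q.primeFactors, (1 : ℝ) / p := by
  classical
  have hq : 0 < q := Nat.pos_of_ne_zero (NeZero.ne q)
  have hn0 : 0 < q.totient := Nat.totient_pos.mpr hq
  have hnR : (q.totient : ℝ) ≠ 0 := Nat.cast_ne_zero.mpr hn0.ne'
  set A := (Finset.Icc 1 q).filter (fun a => Nat.Coprime q a) with hA
  -- expand the sum of mertensG
  have hexp : ∑ a ∈ A, mertensG q a (ℒ a)
      = (A.card : ℝ) * (Real.eulerMascheroniConstant / (q.totient : ℝ))
        + ∑ a ∈ A, Real.log (ℒ a) - ∑ a ∈ A, primePowerResidueSum q a := by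
    simp only [mertensG]
    rw [Finset.sum_sub_distrib, Finset.sum_add_distrib, Finset.sum_const, nsmul_eq_mul]
  -- the sum of the prime-power residue sums
  have hsummA : ∀ a : ℕ, Summable (fun p : Nat.Primes =>
      ∑' ν : ℕ, if 2 ≤ ν ∧ (p : ℕ) ^ ν % q = a % q then ((ν : ℝ) * ((p : ℕ) : ℝ) ^ ν)⁻¹ else 0) := by
    intro a
    refine MGAux.summable_primes (fun p => MGAux.tsum_cond_nonneg _ _) (fun p => ?_)
    exact MGAux.tsum_cond_le p.2.two_le _
  have hSall : Summable (fun p : Nat.Primes =>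
      ∑' ν : ℕ, if 2 ≤ ν then ((ν : ℝ) * ((p : ℕ) : ℝ) ^ ν)⁻¹ else 0) := by
    refine MGAux.summable_primes (fun p => MGAux.tsum_S_nonneg _) (fun p => ?_)
    exact MGAux.tsum_S_le p.2.two_le
  have hSdvd : Summable (fun p : Nat.Primes =>
      if (p : ℕ) ∣ q then (∑' ν : ℕ, if 2 ≤ ν then ((ν : ℝ) * ((p : ℕ) : ℝ) ^ ν)⁻¹ else 0) else 0) := by
    refine MGAux.summable_primes (fun p => ?_) (fun p => ?_)
    · by_cases h : (p : ℕ) ∣ q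
      · rw [if_pos h]; exact MGAux.tsum_S_nonneg _
      · rw [if_neg h]
    · by_cases h : (p : ℕ) ∣ q
      · rw [if_pos h]; exact MGAux.tsum_S_le p.2.two_le
      · rw [if_neg h]; positivity
  have hPP : ∑ a ∈ A, primePowerResidueSum q a
      = (∑' p : Nat.Primes, ∑' ν : ℕ, if 2 ≤ ν then ((ν : ℝ) * ((p : ℕ) : ℝ) ^ ν)⁻¹ else 0)
        - ∑ p ∈ q.primeFactors,
            ∑' ν : ℕ, (if 2 ≤ ν then ((ν : ℝ) * (p : ℝ) ^ ν)⁻¹ else 0) := by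
    have h1 : ∑ a ∈ A, primePowerResidueSum q a
        = ∑' p : Nat.Primes, ∑ a ∈ A,
            ∑' ν : ℕ, if 2 ≤ ν ∧ (p : ℕ) ^ ν % q = a % q then ((ν : ℝ) * ((p : ℕ) : ℝ) ^ ν)⁻¹ else 0 := by
      rw [Summable.tsum_finsetSum (fun a _ => hsummA a)]
      rfl
    rw [h1]
    have h2 : ∀ p : Nat.Primes,
        (∑ a ∈ A, ∑' ν : ℕ, if 2 ≤ ν ∧ (p : ℕ) ^ ν % q = a % q then ((ν : ℝ) * ((p : ℕ) : ℝ) ^ ν)⁻¹ else 0)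
        = (∑' ν : ℕ, if 2 ≤ ν then ((ν : ℝ) * ((p : ℕ) : ℝ) ^ ν)⁻¹ else 0)
          - (if (p : ℕ) ∣ q then (∑' ν : ℕ, if 2 ≤ ν then ((ν : ℝ) * ((p : ℕ) : ℝ) ^ ν)⁻¹ else 0) else 0) :=
      fun p => MGAux.sum_a_tsum q p.2
    rw [tsum_congr h2, Summable.tsum_sub hSall hSdvd,
      MGAux.tsum_primes_dvd q (fun n => ∑' ν : ℕ, if 2 ≤ ν then ((ν : ℝ) * (n : ℝ) ^ ν)⁻¹ else 0)]
  -- the logarithm of the totient quotient as a sum over primes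
  have hlog : Real.log ((q.totient : ℝ) / q)
      = ∑ p ∈ q.primeFactors, Real.log (1 - (p : ℝ)⁻¹) := by
    rw [MGAux.totient_div_eq_prod q]
    refine Real.log_prod fun p hp => ?_
    have hp2 : 2 ≤ p := (Nat.prime_of_mem_primeFactors hp).two_le
    have : (p : ℝ)⁻¹ < 1 := by
      rw [inv_lt_one_iff₀]; right; exact_mod_cast hp2.trans_lt' one_lt_two
    linarith
  have hper : ∀ p ∈ q.primeFactors, Real.log (1 - (p : ℝ)⁻¹)
      = -(1 / (p : ℝ)) - ∑' ν : ℕ, (if 2 ≤ ν then ((ν : ℝ) * (p : ℝ) ^ ν)⁻¹ else 0) := by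
    intro p hp
    have hp2 : 2 ≤ p := (Nat.prime_of_mem_primeFactors hp).two_le
    rw [(MGAux.hasSum_S hp2).tsum_eq, one_div]
    ring
  have hγ : ((q.totient : ℕ) : ℝ) * (Real.eulerMascheroniConstant / (q.totient : ℝ))
      = Real.eulerMascheroniConstant := by
    field_simp
  rw [hexp, hA, MGAux.card_eq_totient q, ← hA, hγ, hPP, sum_log_L q ℒ hℒ, hlog,
    Finset.sum_congr rfl hper, mertensConstant]
  rw [Finset.sum_sub_distrib, Finset.sum_neg_distrib]
  ring
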